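/- Let K ⊂ ℝ³ be the normalized ball of ‖(x,y,z)‖ = |x| + max{|y|,|z|} (rescaled to have volume 1), and let (X,Y,Z) be uniform on it. Then cov(Y², Z²) > 0, i.e. E(Y²Z²) > E(Y²)·E(Z²). In particular the square negative correlation property fails for 1-symmetric convex bodies. -/

import Mathlib

open MeasureTheory Set

lemma int_pow_Icc (n : ℕ) (hn : Odd (n + 1)) {s : ℝ} (hs : 0 ≤ s) :
    ∫ y in Icc (-s) s, y ^ n = 2 * s ^ (n + 1) / (n + 1) := by
  rw [integral_Icc_eq_integral_Ioc,
    ← intervalIntegral.integral_of_le (by linarith : -s ≤ s),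
    integral_pow, hn.neg_pow]
  ring

lemma int_pow_Icc_neg (n : ℕ) {s : ℝ} (hs : s < 0) :
    ∫ y in Icc (-s) s, y ^ n = (0 : ℝ) := by
  rw [Icc_eq_empty (by intro h; linarith)]
  simp

lemma moment (r : ℝ) (hr : 0 ≤ r) (n m : ℕ) (hn : Odd (n + 1)) (hm : Odd (m + 1)) :
    ∫ p in {p : ℝ × ℝ × ℝ | |p.1| + max |p.2.1| |p.2.2| ≤ r}, p.2.1 ^ n * p.2.2 ^ m
      = (2 / (n + 1)) * (2 / (m + 1)) * (2 * r ^ (n + m + 3) / (n + m + 3)) := by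
  set K : Set (ℝ × ℝ × ℝ) := {p | |p.1| + max |p.2.1| |p.2.2| ≤ r} with hKdef
  set f : ℝ × ℝ × ℝ → ℝ := fun p => p.2.1 ^ n * p.2.2 ^ m with hf
  have hcont : Continuous fun p : ℝ × ℝ × ℝ => |p.1| + max |p.2.1| |p.2.2| :=
    (continuous_fst.abs).add (((continuous_fst.comp continuous_snd).abs).max
      ((continuous_snd.comp continuous_snd).abs))
  have hclosed : IsClosed K := isClosed_le hcont continuous_const
  have hmeas : MeasurableSet K := hclosed.measurableSet
  have hsub : K ⊆ Icc (-r) r ×ˢ (Icc (-r) r ×ˢ Icc (-r) r) := by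
    rintro ⟨x, y, z⟩ hp
    simp only [hKdef, mem_setOf_eq] at hp
    have h1 := abs_nonneg x
    have h2 := le_max_left |y| |z|
    have h3 := le_max_right |y| |z|
    have h4 := abs_nonneg y
    have h5 := abs_nonneg z
    refine ⟨abs_le.mp (by linarith), abs_le.mp (by linarith), abs_le.mp (by linarith)⟩
  have hcomp : IsCompact K :=
    (isCompact_Icc.prod (isCompact_Icc.prod isCompact_Icc)).of_isClosed_subset hclosed hsub
  have hint : IntegrableOn f K := by
    apply ContinuousOn.integrableOn_compact hcomp
    exact (((continuous_fst.comp continuous_snd).pow n).mul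
      ((continuous_snd.comp continuous_snd).pow m)).continuousOn
  have hslice : ∀ x : ℝ, ∀ q : ℝ × ℝ,
      ((x, q) ∈ K ↔ q ∈ Icc (-(r - |x|)) (r - |x|) ×ˢ Icc (-(r - |x|)) (r - |x|)) := by
    intro x q
    simp only [hKdef, mem_setOf_eq, mem_prod, mem_Icc, ← abs_le, max_le_iff]
    constructor
    · intro h
      have h2 := le_max_left |q.1| |q.2|
      have h3 := le_max_right |q.1| |q.2|
      exact ⟨by linarith, by linarith⟩
    · rintro ⟨h1, h2⟩
      rcases max_cases |q.1| |q.2| with ⟨he, _⟩ | ⟨he, _⟩ <;> rw [he] <;> linarith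
  have step1 : ∫ p in K, f p
      = ∫ x : ℝ, (∫ y in Icc (-(r - |x|)) (r - |x|), y ^ n)
        * (∫ z in Icc (-(r - |x|)) (r - |x|), z ^ m) := by
    rw [← integral_indicator hmeas]
    rw [show (volume : Measure (ℝ × ℝ × ℝ)) = (volume : Measure ℝ).prod volume from
      Measure.volume_eq_prod ℝ (ℝ × ℝ)]
    rw [integral_prod _ (by
      rw [← Measure.volume_eq_prod ℝ (ℝ × ℝ)]
      exact (integrable_indicator_iff hmeas).mpr hint)]
    congr 1
    funext x
    have : (fun q : ℝ × ℝ => K.indicator f (x, q))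
        = (Icc (-(r - |x|)) (r - |x|) ×ˢ Icc (-(r - |x|)) (r - |x|)).indicator
          (fun q : ℝ × ℝ => q.1 ^ n * q.2 ^ m) := by
      funext q
      by_cases hq : (x, q) ∈ K
      · rw [indicator_of_mem hq, indicator_of_mem ((hslice x q).mp hq)]
      · rw [indicator_of_notMem hq,
          indicator_of_notMem (fun hc => hq ((hslice x q).mpr hc))]
    rw [this, integral_indicator (measurableSet_Icc.prod measurableSet_Icc)]
    rw [show (volume : Measure (ℝ × ℝ)) = (volume : Measure ℝ).prod volume from
      Measure.volume_eq_prod ℝ ℝ]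
    exact setIntegral_prod_mul (fun y => y ^ n) (fun z => z ^ m) _ _
  have step2 : (fun x : ℝ => (∫ y in Icc (-(r - |x|)) (r - |x|), y ^ n)
        * (∫ z in Icc (-(r - |x|)) (r - |x|), z ^ m))
      = (Icc (-r) r).indicator (fun x =>
        (2 * (r - |x|) ^ (n + 1) / (n + 1)) * (2 * (r - |x|) ^ (m + 1) / (m + 1))) := by
    funext x
    by_cases hx : x ∈ Icc (-r) r
    · have hx' : 0 ≤ r - |x| := by
        rw [mem_Icc] at hx
        rcases abs_cases x with ⟨he, _⟩ | ⟨he, _⟩ <;> rw [he] <;> linarith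
      rw [indicator_of_mem hx, int_pow_Icc n hn hx', int_pow_Icc m hm hx']
    · have hx' : r - |x| < 0 := by
        rw [mem_Icc, not_and_or, not_le, not_le] at hx
        rcases abs_cases x with ⟨he, _⟩ | ⟨he, _⟩ <;> rw [he] <;> rcases hx with h | h <;> linarith
      rw [indicator_of_notMem hx, int_pow_Icc_neg n hx', zero_mul]
  have habs : ∫ x in (-r)..r, (r - |x|) ^ (n + m + 2)
      = 2 * r ^ (n + m + 3) / (n + m + 3) := by
    have hc : ∀ c : ℝ, Continuous fun x : ℝ => (c - |x|) ^ (n + m + 2) := fun c =>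
      ((continuous_const.sub continuous_abs).pow _)
    rw [← intervalIntegral.integral_add_adjacent_intervals
      (a := -r) (b := 0) (c := r) ((hc r).intervalIntegrable _ _) ((hc r).intervalIntegrable _ _)]
    have e1 : ∫ x in (-r)..(0:ℝ), (r - |x|) ^ (n + m + 2)
        = ∫ x in (-r)..(0:ℝ), (fun u : ℝ => u ^ (n + m + 2)) (x + r) := by
      apply intervalIntegral.integral_congr
      intro x hx
      rw [uIcc_of_le (by linarith : -r ≤ 0), mem_Icc] at hx
      dsimp only
      rw [abs_of_nonpos hx.2]
      ring_nf
    have e2 : ∫ x in (0:ℝ)..r, (r - |x|) ^ (n + m + 2)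
        = ∫ x in (0:ℝ)..r, (fun u : ℝ => u ^ (n + m + 2)) (r - x) := by
      apply intervalIntegral.integral_congr
      intro x hx
      rw [uIcc_of_le hr, mem_Icc] at hx
      dsimp only
      rw [abs_of_nonneg hx.1]
    rw [e1, e2, intervalIntegral.integral_comp_add_right (fun u : ℝ => u ^ (n + m + 2)) r,
      intervalIntegral.integral_comp_sub_left (fun u : ℝ => u ^ (n + m + 2)) r]
    simp only [neg_add_cancel, zero_add, sub_self, sub_zero]
    rw [integral_pow]
    push_cast
    ring
  rw [step1, step2, integral_indicator measurableSet_Icc, integral_Icc_eq_integral_Ioc,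
    ← intervalIntegral.integral_of_le (by linarith : -r ≤ r)]
  have : ∀ x : ℝ, (2 * (r - |x|) ^ (n + 1) / (n + 1)) * (2 * (r - |x|) ^ (m + 1) / (m + 1))
      = (2 / (n + 1)) * (2 / (m + 1)) * (r - |x|) ^ (n + m + 2) := by
    intro x
    rw [show n + m + 2 = (n + 1) + (m + 1) by ring, pow_add]
    ring
  simp_rw [this]
  rw [intervalIntegral.integral_const_mul, habs]

theorem counterexample_positive_square_correlation (r : ℝ) (hr : 0 < r)
    (K : Set (ℝ × ℝ × ℝ))
    (hK : K = {p | |p.1| + max |p.2.1| |p.2.2| ≤ r})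
    (hvol : volume K = 1) :
    (∫ p in K, p.2.1 ^ 2) * (∫ p in K, p.2.2 ^ 2) <
      ∫ p in K, p.2.1 ^ 2 * p.2.2 ^ 2 := by
  have hodd1 : Odd (0 + 1) := ⟨0, by norm_num⟩
  have hodd3 : Odd (2 + 1) := ⟨1, by norm_num⟩
  have h00 := moment r hr.le 0 0 hodd1 hodd1
  have h20 := moment r hr.le 2 0 hodd3 hodd1
  have h02 := moment r hr.le 0 2 hodd1 hodd3
  have h22 := moment r hr.le 2 2 hodd3 hodd3
  rw [← hK] at h00 h20 h02 h22
  simp only [pow_zero, mul_one, one_mul] at h00 h20 h02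
  norm_num at h00 h20 h02 h22
  rw [Measure.real, hvol] at h00
  have hr3 : r ^ 3 = 3 / 8 := by
    norm_num at h00
    linarith
  rw [h20, h02, h22]
  have h7 : r ^ 7 = 9 / 64 * r := by
    have e : r ^ 7 = (r ^ 3) ^ 2 * r := by ring
    rw [e, hr3]; ring
  have h10 : r ^ 5 * r ^ 5 = 27 / 512 * r := by
    have e : r ^ 5 * r ^ 5 = (r ^ 3) ^ 3 * r := by ring
    rw [e, hr3]; ring
  nlinarith [h7, h10, hr]
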